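/- Let G' be a finite simple graph on an n-element vertex set, let u ∈ V(G'), and let the neighborhood of u in G' be partitioned as N(u) = A ⊔ A'. Let G be the simple graph on vertex set (V(G')∖{u}) ∪ {v, w, v'} (three new vertices) whose edges are the edges of the induced subgraph of G' on V(G')∖{u}, together with {v,a} for each a ∈ A, {v',a'} for each a' ∈ A', and {v,w}, {w,v'}. Then contracting qubits w and v' of |G⟩ against |+⟩ yields, after identifying the vertex v of G with the vertex u of G', exactly (1/2)·|G'⟩; that is, ⟨+|_{v'} ⟨+|_w |G⟩ = (1/2)·|G'⟩. In particular, the graph state |G'⟩ is obtained (up to normalization) from |G⟩ by projecting the two inserted qubits w and v' onto |+⟩. -/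

import Mathlib

/-- The number of edges of `H` with both endpoints in `S`. -/
noncomputable def edgesIn {W : Type} (H : SimpleGraph W) (S : Finset W) : ℕ :=
  Set.ncard {e : Sym2 W | e ∈ H.edgeSet ∧ ∀ x ∈ e, x ∈ S}

/-- The graph state `|H⟩ = 2^{-m/2} ∑_{S ⊆ W} (-1)^{e(S)} |S⟩`, given by its coordinates in
the computational basis indexed by the subsets `S` of the vertex set. -/
noncomputable def graphState {W : Type} [Fintype W] (H : SimpleGraph W) : Finset W → ℂ :=
  fun S => (-1 : ℂ) ^ edgesIn H S / ((Real.sqrt 2 : ℝ) : ℂ) ^ Fintype.card W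

/-- Contraction of the qubit `w` against `|+⟩ = (|0⟩ + |1⟩)/√2`: the linear map sending each
basis state `|S⟩` to `2^{-1/2} |S \ {w}⟩`, expressed on coordinates. -/
noncomputable def contractPlus {W : Type} [DecidableEq W] (w : W)
    (ψ : Finset W → ℂ) : Finset {x : W // x ≠ w} → ℂ :=
  fun S =>
    (ψ (S.map (Function.Embedding.subtype fun x => x ≠ w)) +
     ψ (insert w (S.map (Function.Embedding.subtype fun x => x ≠ w)))) /
      ((Real.sqrt 2 : ℝ) : ℂ)

/-- Contraction of the qubit `w` against `|−⟩ = (|0⟩ − |1⟩)/√2`: the linear map sending each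
basis state `|S⟩` to `2^{-1/2} (−1)^{[w ∈ S]} |S \ {w}⟩`, expressed on coordinates. -/
noncomputable def contractMinus {W : Type} [DecidableEq W] (w : W)
    (ψ : Finset W → ℂ) : Finset {x : W // x ≠ w} → ℂ :=
  fun S =>
    (ψ (S.map (Function.Embedding.subtype fun x => x ≠ w)) -
     ψ (insert w (S.map (Function.Embedding.subtype fun x => x ≠ w)))) /
      ((Real.sqrt 2 : ℝ) : ℂ)

/-- The diagonal operator `Z[B]`, sending `|S⟩` to `(-1)^{|B ∩ S|} |S⟩`. -/
noncomputable def Zop {U : Type} [DecidableEq U] (B : Finset U) (φ : Finset U → ℂ) :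
    Finset U → ℂ :=
  fun S => (-1 : ℂ) ^ (B ∩ S).card * φ S

/-- The vertex set `(V(G') \ {u}) ∪ {v, w, v'}`: the three new vertices `v`, `w`, `v'` are
`Sum.inr 0`, `Sum.inr 1`, `Sum.inr 2` respectively. -/
abbrev BigVert (V' : Type) (u : V') : Type := {x : V' // x ≠ u} ⊕ Fin 3

/-- The relation generating the graph `G`: the edges of the induced subgraph of `G'` on
`V(G') \ {u}`, together with `{v, a}` for `a ∈ A`, `{v', a'}` for `a' ∈ A'`, and the path
edges `{v, w}`, `{w, v'}`. -/
def bigRel {V' : Type} (G' : SimpleGraph V') (u : V') (A A' : Finset V') :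
    BigVert V' u → BigVert V' u → Prop
  | Sum.inl a, Sum.inl b => G'.Adj a.val b.val
  | Sum.inl a, Sum.inr i => (i = 0 ∧ a.val ∈ A) ∨ (i = 2 ∧ a.val ∈ A')
  | Sum.inr i, Sum.inr j => (i = 0 ∧ j = 1) ∨ (i = 1 ∧ j = 2)
  | Sum.inr _, Sum.inl _ => False

/-- The graph `G` obtained from `G'` by replacing the vertex `u` by the path `v - w - v'`,
with `v` adjacent to the neighbors of `u` in `A` and `v'` to those in `A'`. -/
def bigG {V' : Type} (G' : SimpleGraph V') (u : V') (A A' : Finset V') :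
    SimpleGraph (BigVert V' u) := SimpleGraph.fromRel (bigRel G' u A A')

/-- The inserted middle vertex `w`. -/
abbrev wVert (V' : Type) (u : V') : BigVert V' u := Sum.inr 1

/-- The vertex set after contracting the qubit `w`. -/
abbrev RemVert (V' : Type) (u : V') : Type := {x : BigVert V' u // x ≠ wVert V' u}

/-- The inserted vertex `v`, as a vertex of the remaining qubits. -/
def vVert (V' : Type) (u : V') : RemVert V' u :=
  ⟨Sum.inr 0, fun h => absurd (Sum.inr.inj h) (by decide)⟩

/-- The inserted vertex `v'`, as a vertex of the remaining qubits. -/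
def v'Vert (V' : Type) (u : V') : RemVert V' u :=
  ⟨Sum.inr 2, fun h => absurd (Sum.inr.inj h) (by decide)⟩

/-- The restriction of a subset `T` of the remaining qubits to the qubits `V(G') \ {u}`. -/
def restrictT {V' : Type} [Fintype V'] [DecidableEq V'] (u : V')
    (T : Finset (RemVert V' u)) : Finset {x : V' // x ≠ u} :=
  Finset.univ.filter (fun a : {x : V' // x ≠ u} =>
    (⟨Sum.inl a, Sum.inl_ne_inr⟩ : RemVert V' u) ∈ T)

/-- `extendVV u bv bv' φ` is the state `|bv⟩_v |bv'⟩_{v'} ⊗ φ` on the qubits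
`(V(G') \ {u}) ∪ {v, v'}`, expressed on coordinates. -/
noncomputable def extendVV {V' : Type} [Fintype V'] [DecidableEq V'] (u : V')
    (bv bv' : Bool) (φ : Finset {x : V' // x ≠ u} → ℂ) : Finset (RemVert V' u) → ℂ :=
  fun T =>
    if ((vVert V' u ∈ T) ↔ bv = true) ∧ ((v'Vert V' u ∈ T) ↔ bv' = true) then
      φ (restrictT u T)
    else 0

/-- The vertex set after contracting the qubits `w` and `v'`: it consists of the vertices
of `V(G') \ {u}` together with the vertex `v`. -/
abbrev FinalVert (V' : Type) (u : V') : Type := {y : RemVert V' u // y ≠ v'Vert V' u}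

/-- The canonical identification of `V(G')` with the qubits remaining after contracting
`w` and `v'`: the vertex `u` of `G'` is identified with the inserted vertex `v` of `G`,
and every other vertex with itself. -/
def identMap {V' : Type} [DecidableEq V'] (u : V') (x : V') : FinalVert V' u :=
  if h : x = u then
    ⟨vVert V' u, fun hc => absurd (Sum.inr.inj (congrArg Subtype.val hc)) (by decide)⟩
  else
    ⟨⟨Sum.inl ⟨x, h⟩, Sum.inl_ne_inr⟩, fun hc => Sum.inl_ne_inr (congrArg Subtype.val hc)⟩

lemma edgesIn_insert {W : Type} [Fintype W] [DecidableEq W] (H : SimpleGraph W)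
    [DecidableRel H.Adj] (x : W) (S : Finset W) (hx : x ∉ S) :
    edgesIn H (insert x S) = edgesIn H S + (S.filter (fun y => H.Adj x y)).card := by
  classical
  have hinj : Function.Injective (fun y => s(x, y)) := fun a b h => Sym2.congr_right.mp h
  have hset : {e : Sym2 W | e ∈ H.edgeSet ∧ ∀ z ∈ e, z ∈ insert x S}
      = {e : Sym2 W | e ∈ H.edgeSet ∧ ∀ z ∈ e, z ∈ S} ∪
        (fun y => s(x, y)) '' {y : W | y ∈ S ∧ H.Adj x y} := by
    ext e
    induction e using Sym2.ind with
    | _ a b =>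
      simp only [Set.mem_union, Set.mem_setOf_eq, Set.mem_image, SimpleGraph.mem_edgeSet]
      constructor
      · rintro ⟨hab, h⟩
        by_cases hax : a = x
        · subst hax
          have hb : b ∈ S := by
            rcases Finset.mem_insert.mp (h b (by simp)) with h1 | h1
            · exact absurd h1.symm hab.ne
            · exact h1
          exact Or.inr ⟨b, ⟨hb, hab⟩, rfl⟩
        · by_cases hbx : b = x
          · subst hbx
            have ha : a ∈ S := by
              rcases Finset.mem_insert.mp (h a (by simp)) with h1 | h1
              · exact absurd h1 hax
              · exact h1
            exact Or.inr ⟨a, ⟨ha, hab.symm⟩, Sym2.eq_swap⟩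
          · refine Or.inl ⟨hab, fun z hz => ?_⟩
            rcases Sym2.mem_iff.mp hz with rfl | rfl
            · rcases Finset.mem_insert.mp (h z (by simp)) with h1 | h1
              · exact absurd h1 hax
              · exact h1
            · rcases Finset.mem_insert.mp (h z (by simp)) with h1 | h1
              · exact absurd h1 hbx
              · exact h1
      · rintro (⟨hab, h⟩ | ⟨y, ⟨hy, hadj⟩, heq⟩)
        · exact ⟨hab, fun z hz => Finset.mem_insert_of_mem (h z hz)⟩
        · have heq' : s(x, y) = s(a, b) := heq
          rcases Sym2.eq_iff.mp heq' with ⟨rfl, rfl⟩ | ⟨rfl, rfl⟩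
          · exact ⟨hadj, fun z hz => by
              rcases Sym2.mem_iff.mp hz with rfl | rfl
              · exact Finset.mem_insert_self _ _
              · exact Finset.mem_insert_of_mem hy⟩
          · exact ⟨hadj.symm, fun z hz => by
              rcases Sym2.mem_iff.mp hz with rfl | rfl
              · exact Finset.mem_insert_of_mem hy
              · exact Finset.mem_insert_self _ _⟩
  have hdis : Disjoint {e : Sym2 W | e ∈ H.edgeSet ∧ ∀ z ∈ e, z ∈ S}
      ((fun y => s(x, y)) '' {y : W | y ∈ S ∧ H.Adj x y}) := by
    rw [Set.disjoint_left]
    rintro e ⟨_, he⟩ ⟨y, _, rfl⟩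
    exact hx (he x (by simp))
  unfold edgesIn
  rw [hset, Set.ncard_union_eq hdis (Set.toFinite _) (Set.toFinite _),
    Set.ncard_image_of_injective _ hinj]
  congr 1
  rw [← Set.ncard_coe_finset (S.filter (fun y => H.Adj x y))]
  congr 1
  ext y
  simp

lemma edgesIn_map {W W' : Type} (H : SimpleGraph W) (H' : SimpleGraph W')
    (φ : W ↪ W') (hadj : ∀ a b, H'.Adj (φ a) (φ b) ↔ H.Adj a b) (S : Finset W) :
    edgesIn H' (S.map φ) = edgesIn H S := by
  classical
  have hset : {e : Sym2 W' | e ∈ H'.edgeSet ∧ ∀ z ∈ e, z ∈ S.map φ}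
      = Sym2.map φ '' {e : Sym2 W | e ∈ H.edgeSet ∧ ∀ z ∈ e, z ∈ S} := by
    ext e
    induction e using Sym2.ind with
    | _ a b =>
      simp only [Set.mem_setOf_eq, Set.mem_image, SimpleGraph.mem_edgeSet]
      constructor
      · rintro ⟨hab, h⟩
        obtain ⟨a', ha', rfl⟩ := Finset.mem_map.mp (h a (by simp))
        obtain ⟨b', hb', rfl⟩ := Finset.mem_map.mp (h b (by simp))
        refine ⟨s(a', b'), ⟨(hadj _ _).mp hab, fun z hz => ?_⟩, by simp [Sym2.map_pair_eq]⟩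
        rcases Sym2.mem_iff.mp hz with rfl | rfl
        · exact ha'
        · exact hb'
      · rintro ⟨e', ⟨he', hm⟩, heq⟩
        induction e' using Sym2.ind with
        | _ a' b' =>
          rw [Sym2.map_pair_eq] at heq
          have hma : φ a' ∈ S.map φ := Finset.mem_map_of_mem _ (hm a' (by simp))
          have hmb : φ b' ∈ S.map φ := Finset.mem_map_of_mem _ (hm b' (by simp))
          rcases Sym2.eq_iff.mp heq with ⟨rfl, rfl⟩ | ⟨rfl, rfl⟩
          · exact ⟨(hadj _ _).mpr he', fun z hz => by
              rcases Sym2.mem_iff.mp hz with rfl | rfl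
              · exact hma
              · exact hmb⟩
          · exact ⟨((hadj _ _).mpr he').symm, fun z hz => by
              rcases Sym2.mem_iff.mp hz with rfl | rfl
              · exact hmb
              · exact hma⟩
  unfold edgesIn
  rw [hset, Set.ncard_image_of_injective _ (Sym2.map.injective φ.injective)]

/-- Let the neighborhood of `u` in `G'` be partitioned as `A ⊔ A'` and
let `G` be the graph obtained by replacing `u` by the path `v - w - v'` as above.  Then
contracting the qubits `w` and `v'` of `|G⟩` against `|+⟩` yields, after identifying the
vertex `v` of `G` with the vertex `u` of `G'`, exactly `(1/2)·|G'⟩`: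
`⟨+|_{v'} ⟨+|_w |G⟩ = (1/2)·|G'⟩`. -/
theorem contractPlus_v'_contractPlus_w_graphState
    {V' : Type} [Fintype V'] [DecidableEq V'] (G' : SimpleGraph V') (u : V')
    (A A' : Finset V') (hN : (↑A ∪ ↑A' : Set V') = G'.neighborSet u)
    (hdisj : Disjoint A A') :
    contractPlus (v'Vert V' u) (contractPlus (wVert V' u) (graphState (bigG G' u A A'))) =
      fun T : Finset (FinalVert V' u) =>
        graphState G' (Finset.univ.filter fun x : V' => identMap u x ∈ T) / 2 := by
  classical
  funext T
  set BG := bigG G' u A A' with hBGdef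
  -- adjacency facts for `BG`
  have hadj_ll : ∀ a b : {x : V' // x ≠ u}, BG.Adj (Sum.inl a) (Sum.inl b) ↔ G'.Adj a.1 b.1 := by
    intro a b
    rw [hBGdef, bigG, SimpleGraph.fromRel_adj]
    constructor
    · rintro ⟨-, h | h⟩
      · exact h
      · exact h.symm
    · intro h
      exact ⟨fun he => h.ne (congrArg Subtype.val (Sum.inl.inj he)), Or.inl h⟩
  have hadj_v : ∀ a : {x : V' // x ≠ u}, BG.Adj (Sum.inr 0) (Sum.inl a) ↔ a.1 ∈ A := by
    intro a; rw [hBGdef, bigG, SimpleGraph.fromRel_adj]; simp [bigRel]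
  have hadj_v' : ∀ a : {x : V' // x ≠ u}, BG.Adj (Sum.inr 2) (Sum.inl a) ↔ a.1 ∈ A' := by
    intro a; rw [hBGdef, bigG, SimpleGraph.fromRel_adj]; simp [bigRel]
  have hadj_w : ∀ a : {x : V' // x ≠ u}, ¬ BG.Adj (Sum.inr 1) (Sum.inl a) := by
    intro a; rw [hBGdef, bigG, SimpleGraph.fromRel_adj]; simp [bigRel]
  have hadj_wv : BG.Adj (Sum.inr 1) (Sum.inr 0) := by
    rw [hBGdef, bigG, SimpleGraph.fromRel_adj]
    exact ⟨by simp, Or.inr (Or.inl ⟨rfl, rfl⟩)⟩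
  have hadj_wv' : BG.Adj (Sum.inr 1) (Sum.inr 2) := by
    rw [hBGdef, bigG, SimpleGraph.fromRel_adj]
    exact ⟨by simp, Or.inl (Or.inr ⟨rfl, rfl⟩)⟩
  have hadj_vv' : ¬ BG.Adj (Sum.inr 2) (Sum.inr 0) := by
    rw [hBGdef, bigG, SimpleGraph.fromRel_adj]; simp [bigRel]
  -- the relevant subsets
  set S' : Finset V' := Finset.univ.filter (fun x : V' => identMap u x ∈ T) with hS'def
  set SL' : Finset V' := S'.erase u with hSL'def
  set SL : Finset {x : V' // x ≠ u} := SL'.subtype (fun x => x ≠ u) with hSLdef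
  have hSLmap : SL.map (Function.Embedding.subtype _) = SL' := by
    rw [hSLdef, Finset.subtype_map, Finset.filter_eq_self]
    intro a ha
    exact (Finset.mem_erase.mp ha).1
  have hmemSL : ∀ a : {x : V' // x ≠ u}, a ∈ SL ↔ a.1 ∈ S' := by
    intro a
    rw [hSLdef, Finset.mem_subtype, hSL'def, Finset.mem_erase]
    exact and_iff_right a.2
  set inlE : {x : V' // x ≠ u} ↪ BigVert V' u := ⟨Sum.inl, Sum.inl_injective⟩ with hinlEdef
  have hmemX : ∀ a : {x : V' // x ≠ u}, (Sum.inl a : BigVert V' u) ∈ SL.map inlE ↔ a.1 ∈ S' := by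
    intro a
    rw [show (Sum.inl a : BigVert V' u) = inlE a from rfl, Finset.mem_map']
    exact hmemSL a
  have hnmemX : ∀ i : Fin 3, (Sum.inr i : BigVert V' u) ∉ SL.map inlE := by
    rintro i hi
    obtain ⟨b, -, heq⟩ := Finset.mem_map.mp hi
    exact absurd heq (by simp [hinlEdef])
  -- unfold the goal
  simp only [contractPlus, graphState]
  rw [Finset.map_insert]
  set Sb : Finset (BigVert V' u) :=
    (T.map (Function.Embedding.subtype fun y => y ≠ v'Vert V' u)).map
      (Function.Embedding.subtype fun x => x ≠ wVert V' u) with hSbdef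
  have hmemSb : ∀ x : BigVert V' u, x ∈ Sb ↔ ∃ y ∈ T, (y : RemVert V' u).1 = x := by
    intro x
    rw [hSbdef]
    simp only [Finset.mem_map, Function.Embedding.coe_subtype]
    constructor
    · rintro ⟨z, ⟨y, hy, rfl⟩, rfl⟩
      exact ⟨y, hy, rfl⟩
    · rintro ⟨y, hy, rfl⟩
      exact ⟨y.1, ⟨y, hy, rfl⟩, rfl⟩
  have hw_nmem : (Sum.inr 1 : BigVert V' u) ∉ Sb := by
    rw [hmemSb]
    rintro ⟨y, -, hval⟩
    exact y.1.2 hval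
  have hv'_nmem : (Sum.inr 2 : BigVert V' u) ∉ Sb := by
    rw [hmemSb]
    rintro ⟨y, -, hval⟩
    exact y.2 (Subtype.ext hval)
  have hidu : ((identMap u u : FinalVert V' u) : RemVert V' u).1 = Sum.inr 0 := by
    rw [identMap, dif_pos rfl]
    rfl
  have hida : ∀ a : {x : V' // x ≠ u},
      ((identMap u a.1 : FinalVert V' u) : RemVert V' u).1 = Sum.inl a := by
    intro a
    rw [identMap, dif_neg a.2]
  have hv_mem : ((Sum.inr 0 : BigVert V' u) ∈ Sb) ↔ u ∈ S' := by
    rw [hmemSb, hS'def, Finset.mem_filter]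
    constructor
    · rintro ⟨y, hy, hval⟩
      have : y = identMap u u := Subtype.ext (Subtype.ext (hval.trans hidu.symm))
      exact ⟨Finset.mem_univ _, this ▸ hy⟩
    · rintro ⟨-, hT⟩
      exact ⟨identMap u u, hT, hidu⟩
  have hl_mem : ∀ a : {x : V' // x ≠ u}, ((Sum.inl a : BigVert V' u) ∈ Sb) ↔ a.1 ∈ S' := by
    intro a
    rw [hmemSb, hS'def, Finset.mem_filter]
    constructor
    · rintro ⟨y, hy, hval⟩
      have : y = identMap u a.1 := Subtype.ext (Subtype.ext (hval.trans (hida a).symm))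
      exact ⟨Finset.mem_univ _, this ▸ hy⟩
    · rintro ⟨-, hT⟩
      exact ⟨identMap u a.1, hT, hida a⟩
  -- base edge count
  have hbase : edgesIn BG (SL.map inlE) = edgesIn G' SL' := by
    have h1 : edgesIn BG (SL.map inlE) = edgesIn (G'.comap (Subtype.val)) SL :=
      edgesIn_map _ _ inlE (fun a b => hadj_ll a b) SL
    have h2 : edgesIn G' (SL.map (Function.Embedding.subtype _)) =
        edgesIn (G'.comap (Subtype.val)) SL :=
      edgesIn_map _ _ _ (fun a b => Iff.rfl) SL
    rw [h1, ← h2, hSLmap]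
  set dA : ℕ := (SL.filter (fun a => a.1 ∈ A)).card with hdAdef
  set dA' : ℕ := (SL.filter (fun a => a.1 ∈ A')).card with hdA'def
  set e0 : ℕ := edgesIn G' SL' with he0def
  have hfA : ((SL.map inlE).filter (fun y => BG.Adj (Sum.inr 0) y)).card = dA := by
    rw [Finset.filter_map, Finset.card_map, hdAdef]
    congr 1
    apply Finset.filter_congr
    intro a _
    exact hadj_v a
  have hfA' : ((SL.map inlE).filter (fun y => BG.Adj (Sum.inr 2) y)).card = dA' := by
    rw [Finset.filter_map, Finset.card_map, hdA'def]
    congr 1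
    apply Finset.filter_congr
    intro a _
    exact hadj_v' a
  have hfw : (SL.map inlE).filter (fun y => BG.Adj (Sum.inr 1) y) = ∅ := by
    rw [Finset.filter_map]
    rw [Finset.filter_false_of_mem (p := (fun y => BG.Adj (Sum.inr 1) y) ∘ ⇑inlE) (fun a _ => hadj_w a)]
    simp
  -- the total degree of u
  have hdeg : (SL.filter (fun a => G'.Adj u a.1)).card = dA + dA' := by
    have h1 : SL.filter (fun a => G'.Adj u a.1) =
        SL.filter (fun a => a.1 ∈ A ∨ a.1 ∈ A') := by
      apply Finset.filter_congr
      intro a _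
      have := Set.ext_iff.mp hN a.1
      simp only [Set.mem_union, Finset.coe_sort_coe, Finset.mem_coe,
        SimpleGraph.mem_neighborSet] at this
      rw [← this]
    rw [h1, Finset.filter_or, Finset.card_union_of_disjoint, hdAdef, hdA'def]
    rw [Finset.disjoint_left]
    rintro a ha ha'
    exact Finset.disjoint_left.mp hdisj (Finset.mem_filter.mp ha).2
      (Finset.mem_filter.mp ha').2
  -- cardinality of the big vertex set
  have hm : Fintype.card (BigVert V' u) = Fintype.card V' + 2 := by
    have h1 : Fintype.card (BigVert V' u) = Fintype.card {x : V' // x ≠ u} + 3 := by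
      simp [Fintype.card_sum]
    have h2 : Fintype.card {x : V' // x ≠ u} = Fintype.card V' - 1 := by
      have := Fintype.card_subtype_compl (fun x : V' => x = u)
      simpa [Fintype.card_subtype_eq] using this
    have h3 : 1 ≤ Fintype.card V' := Fintype.card_pos_iff.mpr ⟨u⟩
    omega
  have hr0 : ((Real.sqrt 2 : ℝ) : ℂ) ≠ 0 := by
    simp only [ne_eq, Complex.ofReal_eq_zero]
    exact Real.sqrt_ne_zero'.mpr (by norm_num)
  have hr2 : ((Real.sqrt 2 : ℝ) : ℂ) ^ 2 = 2 := by
    rw [← Complex.ofReal_pow, Real.sq_sqrt (by norm_num : (0:ℝ) ≤ 2)]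
    norm_num
  by_cases hc : u ∈ S'
  · -- the vertex v is occupied
    have hSbeq : Sb = insert (Sum.inr 0) (SL.map inlE) := by
      ext x
      rcases x with a | i
      · rw [hl_mem a, Finset.mem_insert, hmemX a]
        simp
      · fin_cases i
        · simp [hv_mem, hc]
        · simp [hw_nmem, hnmemX]
        · simp [hv'_nmem, hnmemX]
    have hvX : (Sum.inr 0 : BigVert V' u) ∉ SL.map inlE := hnmemX 0
    have h00 : edgesIn BG Sb = e0 + dA := by
      rw [hSbeq, edgesIn_insert BG _ _ hvX, hbase, hfA]
    have h01 : edgesIn BG (insert (Sum.inr 2) Sb) = e0 + dA + dA' := by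
      rw [edgesIn_insert BG _ _ hv'_nmem, h00]
      congr 1
      rw [hSbeq, Finset.filter_insert, if_neg hadj_vv', hfA']
    have h10 : edgesIn BG (insert (Sum.inr 1) Sb) = e0 + dA + 1 := by
      rw [edgesIn_insert BG _ _ hw_nmem, h00]
      congr 1
      rw [hSbeq, Finset.filter_insert, if_pos hadj_wv, hfw]
      simp
    have hwn2 : (Sum.inr 1 : BigVert V' u) ∉ insert (Sum.inr 2) Sb := by
      simp [hw_nmem]
    have h11 : edgesIn BG (insert (Sum.inr 1) (insert (Sum.inr 2) Sb)) = e0 + dA + dA' + 2 := by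
      rw [edgesIn_insert BG _ _ hwn2, h01]
      congr 1
      rw [Finset.filter_insert, if_pos hadj_wv', hSbeq, Finset.filter_insert, if_pos hadj_wv,
        hfw]
      simp
    have hE' : edgesIn G' S' = e0 + (dA + dA') := by
      have hu_not : u ∉ SL' := Finset.notMem_erase u S'
      have hins : S' = insert u SL' := (Finset.insert_erase hc).symm
      rw [hins, edgesIn_insert G' u SL' hu_not, he0def]
      congr 1
      rw [← hSLmap, Finset.filter_map, Finset.card_map, ← hdeg]
      apply congrArg
      apply Finset.filter_congr
      intro a _
      simp
    rw [show (Function.Embedding.subtype fun x : BigVert V' u => x ≠ wVert V' u)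
        (v'Vert V' u) = (Sum.inr 2 : BigVert V' u) from rfl]
    rw [show (wVert V' u : BigVert V' u) = Sum.inr 1 from rfl]
    rw [h00, h01, h10, h11, hE', hm, pow_add _ (Fintype.card V') 2, hr2]
    simp only [pow_add]
    have hrn : ((Real.sqrt 2 : ℝ) : ℂ) ^ Fintype.card V' ≠ 0 := pow_ne_zero _ hr0
    have hrr : ((Real.sqrt 2 : ℝ) : ℂ) * ((Real.sqrt 2 : ℝ) : ℂ) = 2 := by
      rw [← sq]; exact hr2
    field_simp
    linear_combination (-(-1 : ℂ) ^ dA') * hr2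
  · -- the vertex v is unoccupied
    have hSbeq : Sb = SL.map inlE := by
      ext x
      rcases x with a | i
      · rw [hl_mem a, hmemX a]
      · fin_cases i
        · simp [hv_mem, hc, hnmemX]
        · simp [hw_nmem, hnmemX]
        · simp [hv'_nmem, hnmemX]
    have h00 : edgesIn BG Sb = e0 := by rw [hSbeq, hbase]
    have h01 : edgesIn BG (insert (Sum.inr 2) Sb) = e0 + dA' := by
      rw [edgesIn_insert BG _ _ hv'_nmem, h00, hSbeq, hfA']
    have h10 : edgesIn BG (insert (Sum.inr 1) Sb) = e0 := by
      rw [edgesIn_insert BG _ _ hw_nmem, h00, hSbeq, hfw]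
      simp
    have hwn2 : (Sum.inr 1 : BigVert V' u) ∉ insert (Sum.inr 2) Sb := by
      simp [hw_nmem]
    have h11 : edgesIn BG (insert (Sum.inr 1) (insert (Sum.inr 2) Sb)) = e0 + dA' + 1 := by
      rw [edgesIn_insert BG _ _ hwn2, h01]
      congr 1
      rw [Finset.filter_insert, if_pos hadj_wv', hSbeq, hfw]
      simp
    have hE' : edgesIn G' S' = e0 := by
      rw [he0def, hSL'def, Finset.erase_eq_of_notMem hc]
    rw [show (Function.Embedding.subtype fun x : BigVert V' u => x ≠ wVert V' u)
        (v'Vert V' u) = (Sum.inr 2 : BigVert V' u) from rfl]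
    rw [show (wVert V' u : BigVert V' u) = Sum.inr 1 from rfl]
    rw [h00, h01, h10, h11, hE', hm, pow_add _ (Fintype.card V') 2, hr2]
    simp only [pow_add]
    have hrn : ((Real.sqrt 2 : ℝ) : ℂ) ^ Fintype.card V' ≠ 0 := pow_ne_zero _ hr0
    have hrr : ((Real.sqrt 2 : ℝ) : ℂ) * ((Real.sqrt 2 : ℝ) : ℂ) = 2 := by
      rw [← sq]; exact hr2
    field_simp
    linear_combination (-1 : ℂ) * hr2
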